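/- Let n ≥ 1 be an integer and let F : [0,1] → [0,1] be continuously differentiable and nondecreasing with F(1) = 1 and F(t) < 1 for all t ∈ [0,1). For k ∈ [0,1) define x(k) = k + (∫ₖ¹ (1−F(s)) ds)/(1−F(k)), and set x(1) = 1. Then ∫₀¹ x(k)·n·F(k)ⁿ⁻¹·F′(k) dk = 1 + ∫₀¹ [ n(1−F(k))·( ∑_{i=1}^{n−1} (F(0)ⁱ − F(k)ⁱ)/i + log(1−F(0)) − log(1−F(k)) ) − F(k)ⁿ ] dk. (This is the change-of-variable identity expressing the expected maximum of n i.i.d. signals — the total surplus — in terms of the virtual value distribution F.) -/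

import Mathlib

open MeasureTheory intervalIntegral Set Topology Filter

lemma stmt17_log_bound {x : ℝ} (h0 : 0 ≤ x) (h1 : x ≤ 1) : x * |Real.log x| ≤ 1 := by
  rcases eq_or_lt_of_le h0 with h | h
  · simp [← h]
  · have hlog : Real.log x ≤ 0 := Real.log_nonpos h0 h1
    rw [abs_of_nonpos hlog, ← Real.log_inv]
    have h2 : Real.log x⁻¹ ≤ x⁻¹ - 1 := Real.log_le_sub_one_of_pos (by positivity)
    have h3 : x * x⁻¹ = 1 := mul_inv_cancel₀ (ne_of_gt h)
    nlinarith

lemma stmt17_geom {y : ℝ} (n : ℕ) (hn : 1 ≤ n) :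
    (∑ i ∈ Finset.Icc 1 (n - 1), y ^ (i - 1)) * (1 - y) = 1 - y ^ (n - 1) := by
  have h1 : Finset.Icc 1 (n - 1) = Finset.Ico 1 n := by
    rw [← Finset.Ico_add_one_right_eq_Icc, Nat.sub_add_cancel hn]
  have h2 : ∑ i ∈ Finset.Ico 1 n, y ^ (i - 1) = ∑ j ∈ Finset.range (n - 1), y ^ j := by
    rw [Finset.sum_Ico_eq_sum_range]
    simp
  have h3 := geom_sum_mul y (n - 1)
  rw [h1, h2]
  nlinarith [h3]

noncomputable def stmt17G (F : ℝ → ℝ) (k : ℝ) : ℝ := ∫ s in k..(1:ℝ), (1 - F s)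

noncomputable def stmt17S (n : ℕ) (F : ℝ → ℝ) (k : ℝ) : ℝ :=
  (∑ i ∈ Finset.Icc 1 (n - 1), (F 0 ^ i - F k ^ i) / (i : ℝ)) +
    Real.log (1 - F 0) - Real.log (1 - F k)

noncomputable def stmt17L (n : ℕ) (F F' : ℝ → ℝ) (k : ℝ) : ℝ :=
  (k + stmt17G F k / (1 - F k)) * (n * F k ^ (n - 1) * F' k)

noncomputable def stmt17R (n : ℕ) (F : ℝ → ℝ) (k : ℝ) : ℝ :=
  n * (1 - F k) * stmt17S n F k - F k ^ n

noncomputable def stmt17Phi (n : ℕ) (F : ℝ → ℝ) (k : ℝ) : ℝ :=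
  k * F k ^ n + stmt17G F k * (n * stmt17S n F k)

theorem stmt17' (n : ℕ) (hn : 1 ≤ n) (F F' : ℝ → ℝ)
    (hderiv : ∀ t ∈ Set.Icc (0:ℝ) 1, HasDerivWithinAt F (F' t) (Set.Icc (0:ℝ) 1) t)
    (hF'cont : ContinuousOn F' (Set.Icc (0:ℝ) 1))
    (hmono : MonotoneOn F (Set.Icc (0:ℝ) 1))
    (hrange : ∀ t ∈ Set.Icc (0:ℝ) 1, F t ∈ Set.Icc (0:ℝ) 1)
    (hone : F 1 = 1)
    (hlt : ∀ t ∈ Set.Ico (0:ℝ) 1, F t < 1) :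
    (∫ k in (0:ℝ)..1, stmt17L n F F' k) = 1 + ∫ k in (0:ℝ)..1, stmt17R n F k := by
  have hFc : ContinuousOn F (Set.Icc (0:ℝ) 1) := fun t ht => (hderiv t ht).continuousWithinAt
  have hgc : ContinuousOn (fun s => 1 - F s) (Set.Icc (0:ℝ) 1) := continuousOn_const.sub hFc
  -- interval integrability of 1 - F on subintervals of [0,1]
  have hgint : ∀ a b : ℝ, a ∈ Set.Icc (0:ℝ) 1 → b ∈ Set.Icc (0:ℝ) 1 →
      IntervalIntegrable (fun s => 1 - F s) volume a b := by
    intro a b ha hb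
    exact (hgc.mono (Set.uIcc_subset_Icc ha hb)).intervalIntegrable
  -- continuity of G on [0,1]
  have hGcont : ContinuousOn (stmt17G F) (Set.Icc (0:ℝ) 1) := by
    have h := intervalIntegral.continuousOn_primitive_interval_left
      (f := fun s => 1 - F s) (μ := volume) (a := (0:ℝ)) (b := 1)
      (by rw [Set.uIcc_of_le (by norm_num : (0:ℝ) ≤ 1)]; exact hgc.integrableOn_Icc)
    rwa [Set.uIcc_of_le (by norm_num : (0:ℝ) ≤ 1)] at h
  -- nonnegativity and upper bound for G
  have hG0 : ∀ k ∈ Set.Icc (0:ℝ) 1, 0 ≤ stmt17G F k := by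
    intro k hk
    apply intervalIntegral.integral_nonneg hk.2
    intro u hu
    have hu1 : u ∈ Set.Icc (0:ℝ) 1 := ⟨le_trans hk.1 hu.1, hu.2⟩
    have := (hrange u hu1).2
    linarith
  have hGle : ∀ k ∈ Set.Icc (0:ℝ) 1, stmt17G F k ≤ (1 - k) * (1 - F k) := by
    intro k hk
    have h1 : stmt17G F k ≤ ∫ _ in k..(1:ℝ), (1 - F k) := by
      apply intervalIntegral.integral_mono_on hk.2 (hgint k 1 hk (by norm_num))
        intervalIntegrable_const
      intro u hu
      have hu1 : u ∈ Set.Icc (0:ℝ) 1 := ⟨le_trans hk.1 hu.1, hu.2⟩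
      have := hmono hk hu1 hu.1
      linarith
    simp only [intervalIntegral.integral_const, smul_eq_mul] at h1
    nlinarith [h1]
  have hpos : ∀ k ∈ Set.Ico (0:ℝ) 1, 0 < 1 - F k := by
    intro k hk; have := hlt k hk; linarith
  -- true derivatives on the interior
  have hFd : ∀ t ∈ Set.Ioo (0:ℝ) 1, HasDerivAt F (F' t) t := by
    intro t ht
    exact (hderiv t (Set.Ioo_subset_Icc_self ht)).hasDerivAt (Icc_mem_nhds ht.1 ht.2)
  have hGd : ∀ t ∈ Set.Ioo (0:ℝ) 1, HasDerivAt (stmt17G F) (-(1 - F t)) t := by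
    intro t ht
    have hmeas : StronglyMeasurableAtFilter (fun s => 1 - F s) (𝓝 t) volume :=
      ContinuousOn.stronglyMeasurableAtFilter isOpen_Ioo
        (hgc.mono Set.Ioo_subset_Icc_self) t ht
    have hca : ContinuousAt (fun s => 1 - F s) t :=
      (hgc.mono Set.Ioo_subset_Icc_self).continuousAt (Ioo_mem_nhds ht.1 ht.2)
    exact intervalIntegral.integral_hasDerivAt_left
      (hgint t 1 (Set.Ioo_subset_Icc_self ht) (by norm_num)) hmeas hca
  have hSd : ∀ t ∈ Set.Ioo (0:ℝ) 1, HasDerivAt (stmt17S n F)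
      (F t ^ (n - 1) * F' t / (1 - F t)) t := by
    intro t ht
    have hft := hFd t ht
    have hpt : (0:ℝ) < 1 - F t := hpos t ⟨ht.1.le, ht.2⟩
    have hsum : HasDerivAt (fun k => ∑ i ∈ Finset.Icc 1 (n - 1), (F 0 ^ i - F k ^ i) / (i:ℝ))
        (∑ i ∈ Finset.Icc 1 (n - 1), (0 - (i:ℝ) * F t ^ (i - 1) * F' t) / (i:ℝ)) t := by
      apply HasDerivAt.fun_sum
      intro i _
      exact ((hasDerivAt_const t (F 0 ^ i)).sub (hft.pow i)).div_const _
    have hlog : HasDerivAt (fun k => Real.log (1 - F k)) ((0 - F' t) / (1 - F t)) t :=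
      ((hasDerivAt_const t (1:ℝ)).sub hft).log (ne_of_gt hpt)
    have hS : HasDerivAt (stmt17S n F)
        ((∑ i ∈ Finset.Icc 1 (n - 1), (0 - (i:ℝ) * F t ^ (i - 1) * F' t) / (i:ℝ))
          - (0 - F' t) / (1 - F t)) t := by
      unfold stmt17S
      exact (hsum.add_const _).sub hlog
    convert hS using 1
    have hterm : ∀ i ∈ Finset.Icc 1 (n - 1),
        (0 - (i:ℝ) * F t ^ (i - 1) * F' t) / (i:ℝ) = -(F t ^ (i - 1)) * F' t := by
      intro i hi
      have hi1 : (1:ℕ) ≤ i := (Finset.mem_Icc.mp hi).1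
      have hi0 : (i:ℝ) ≠ 0 := Nat.cast_ne_zero.mpr (by omega)
      field_simp
      ring
    rw [Finset.sum_congr rfl hterm]
    have hT := stmt17_geom (y := F t) n hn
    have hsum2 : (∑ i ∈ Finset.Icc 1 (n - 1), -(F t ^ (i - 1)) * F' t)
        = -(∑ i ∈ Finset.Icc 1 (n - 1), F t ^ (i - 1)) * F' t := by
      rw [← Finset.sum_mul, ← Finset.sum_neg_distrib]
    rw [hsum2]
    field_simp
    linear_combination F' t * hT
  -- derivative of Phi
  have hPhid : ∀ t ∈ Set.Ioo (0:ℝ) 1, HasDerivAt (stmt17Phi n F)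
      (stmt17L n F F' t - stmt17R n F t) t := by
    intro t ht
    have hft := hFd t ht
    have hpt : (0:ℝ) < 1 - F t := hpos t ⟨ht.1.le, ht.2⟩
    have h1 : HasDerivAt (fun k => k * F k ^ n)
        (1 * F t ^ n + t * ((n:ℝ) * F t ^ (n - 1) * F' t)) t :=
      (hasDerivAt_id t).mul (hft.pow n)
    have h2 : HasDerivAt (fun k => stmt17G F k * ((n:ℝ) * stmt17S n F k))
        ((-(1 - F t)) * ((n:ℝ) * stmt17S n F t)
          + stmt17G F t * ((n:ℝ) * (F t ^ (n - 1) * F' t / (1 - F t)))) t :=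
      (hGd t ht).mul ((hSd t ht).const_mul _)
    have h3 := h1.add h2
    have h4 : HasDerivAt (stmt17Phi n F)
        (1 * F t ^ n + t * ((n:ℝ) * F t ^ (n - 1) * F' t)
          + ((-(1 - F t)) * ((n:ℝ) * stmt17S n F t)
            + stmt17G F t * ((n:ℝ) * (F t ^ (n - 1) * F' t / (1 - F t))))) t := h3
    convert h4 using 1
    unfold stmt17L stmt17R
    field_simp
    ring
  -- bound on F'
  obtain ⟨M, hM⟩ : ∃ M : ℝ, ∀ t ∈ Set.Icc (0:ℝ) 1, ‖F' t‖ ≤ M :=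
    isCompact_Icc.exists_bound_of_continuousOn hF'cont
  have hM0 : 0 ≤ M := le_trans (norm_nonneg _) (hM 0 (by norm_num))
  -- bounds on F values
  have hF01 : ∀ k ∈ Set.Icc (0:ℝ) 1, 0 ≤ F k ∧ F k ≤ 1 := fun k hk =>
    ⟨(hrange k hk).1, (hrange k hk).2⟩
  -- abs bound on S
  set c0 : ℝ := |Real.log (1 - F 0)| with hc0
  have hc00 : 0 ≤ c0 := abs_nonneg _
  have hSabs : ∀ k ∈ Set.Icc (0:ℝ) 1,
      |stmt17S n F k| ≤ (n:ℝ) + c0 + |Real.log (1 - F k)| := by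
    intro k hk
    have hsum : |∑ i ∈ Finset.Icc 1 (n - 1), (F 0 ^ i - F k ^ i) / (i:ℝ)| ≤ (n:ℝ) := by
      calc |∑ i ∈ Finset.Icc 1 (n - 1), (F 0 ^ i - F k ^ i) / (i:ℝ)|
          ≤ ∑ i ∈ Finset.Icc 1 (n - 1), |(F 0 ^ i - F k ^ i) / (i:ℝ)| :=
            Finset.abs_sum_le_sum_abs _ _
        _ ≤ ∑ _i ∈ Finset.Icc 1 (n - 1), (1:ℝ) := by
            apply Finset.sum_le_sum
            intro i hi
            have hi1 : (1:ℕ) ≤ i := (Finset.mem_Icc.mp hi).1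
            have h0 := hF01 0 (by norm_num)
            have hk1 := hF01 k hk
            have ha : |F 0 ^ i - F k ^ i| ≤ 1 := by
              rw [abs_le]
              constructor
              · nlinarith [pow_le_one₀ hk1.1 hk1.2 (n := i), pow_nonneg h0.1 i]
              · nlinarith [pow_le_one₀ h0.1 h0.2 (n := i), pow_nonneg hk1.1 i]
            rw [abs_div, Nat.abs_cast]
            apply div_le_one_of_le₀ (le_trans ha (by exact_mod_cast hi1))
            positivity
        _ = ((Finset.Icc 1 (n - 1)).card : ℝ) := by simp
        _ ≤ (n:ℝ) := by
            rw [Nat.card_Icc]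
            exact_mod_cast Nat.le_trans (by omega) (le_refl n)
    unfold stmt17S
    calc |(∑ i ∈ Finset.Icc 1 (n - 1), (F 0 ^ i - F k ^ i) / (i:ℝ))
          + Real.log (1 - F 0) - Real.log (1 - F k)|
        ≤ |(∑ i ∈ Finset.Icc 1 (n - 1), (F 0 ^ i - F k ^ i) / (i:ℝ)) + Real.log (1 - F 0)|
            + |Real.log (1 - F k)| := abs_sub _ _
      _ ≤ |∑ i ∈ Finset.Icc 1 (n - 1), (F 0 ^ i - F k ^ i) / (i:ℝ)| + c0
            + |Real.log (1 - F k)| := by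
          have := abs_add_le (∑ i ∈ Finset.Icc 1 (n - 1), (F 0 ^ i - F k ^ i) / (i:ℝ))
            (Real.log (1 - F 0))
          rw [hc0]; linarith
      _ ≤ (n:ℝ) + c0 + |Real.log (1 - F k)| := by linarith
  -- the quotient G/(1-F) lies in [0,1] on [0,1]
  have hq : ∀ k ∈ Set.Icc (0:ℝ) 1,
      0 ≤ stmt17G F k / (1 - F k) ∧ stmt17G F k / (1 - F k) ≤ 1 := by
    intro k hk
    rcases eq_or_lt_of_le hk.2 with h1 | h1
    · subst h1
      have : stmt17G F 1 = 0 := by simp [stmt17G]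
      rw [this, zero_div]
      norm_num
    · have hp := hpos k ⟨hk.1, h1⟩
      constructor
      · exact div_nonneg (hG0 k hk) hp.le
      · rw [div_le_one hp]
        have h2 := hGle k hk
        have hx : 0 ≤ k * (1 - F k) := mul_nonneg hk.1 hp.le
        nlinarith
  -- measurability ingredients
  have hFm : AEMeasurable F (volume.restrict (Set.Icc (0:ℝ) 1)) :=
    hFc.aemeasurable measurableSet_Icc
  have hGm : AEMeasurable (stmt17G F) (volume.restrict (Set.Icc (0:ℝ) 1)) :=
    hGcont.aemeasurable measurableSet_Icc
  have hF'm : AEMeasurable F' (volume.restrict (Set.Icc (0:ℝ) 1)) :=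
    hF'cont.aemeasurable measurableSet_Icc
  have hSm : AEMeasurable (stmt17S n F) (volume.restrict (Set.Icc (0:ℝ) 1)) := by
    unfold stmt17S
    apply AEMeasurable.sub
    apply AEMeasurable.add
    · exact Finset.aemeasurable_fun_sum _ fun i _ =>
        (aemeasurable_const.sub (hFm.pow_const i)).div aemeasurable_const
    · exact aemeasurable_const
    · exact Real.measurable_log.comp_aemeasurable (aemeasurable_const.sub hFm)
  -- integrability of L
  have hLint : IntervalIntegrable (stmt17L n F F') volume 0 1 := by
    rw [intervalIntegrable_iff_integrableOn_Icc_of_le (by norm_num : (0:ℝ) ≤ 1)]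
    constructor
    · apply AEMeasurable.aestronglyMeasurable
      unfold stmt17L
      exact (aemeasurable_id.add (hGm.div (aemeasurable_const.sub hFm))).mul
        ((aemeasurable_const.mul (hFm.pow_const _)).mul hF'm)
    · apply MeasureTheory.HasFiniteIntegral.of_bounded (C := 2 * ((n:ℝ) * M))
      rw [ae_restrict_iff' measurableSet_Icc]
      apply ae_of_all
      intro k hk
      have hqk := hq k hk
      have hFk := hF01 k hk
      have hFp : |F k ^ (n - 1)| ≤ 1 := by
        rw [abs_of_nonneg (pow_nonneg hFk.1 _)]
        exact pow_le_one₀ hFk.1 hFk.2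
      have hF'k := hM k hk
      unfold stmt17L
      rw [Real.norm_eq_abs, abs_mul]
      have h1 : |k + stmt17G F k / (1 - F k)| ≤ 2 := by
        rw [abs_le]; constructor <;> [nlinarith [hk.1, hqk.1]; nlinarith [hk.2, hqk.2]]
      have h2 : |(n:ℝ) * F k ^ (n - 1) * F' k| ≤ (n:ℝ) * M := by
        rw [abs_mul, abs_mul, abs_of_nonneg (Nat.cast_nonneg n : (0:ℝ) ≤ n)]
        rw [Real.norm_eq_abs] at hF'k
        calc (n:ℝ) * |F k ^ (n - 1)| * |F' k| ≤ (n:ℝ) * 1 * M := by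
              apply mul_le_mul
              · exact mul_le_mul_of_nonneg_left hFp (Nat.cast_nonneg n)
              · exact hF'k
              · exact abs_nonneg _
              · positivity
          _ = (n:ℝ) * M := by ring
      nlinarith [abs_nonneg (k + stmt17G F k / (1 - F k)),
        abs_nonneg ((n:ℝ) * F k ^ (n - 1) * F' k)]
  -- integrability of R
  have hRint : IntervalIntegrable (stmt17R n F) volume 0 1 := by
    rw [intervalIntegrable_iff_integrableOn_Icc_of_le (by norm_num : (0:ℝ) ≤ 1)]
    constructor
    · apply AEMeasurable.aestronglyMeasurable
      unfold stmt17R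
      exact ((aemeasurable_const.mul (aemeasurable_const.sub hFm)).mul hSm).sub
        (hFm.pow_const n)
    · apply MeasureTheory.HasFiniteIntegral.of_bounded
        (C := (n:ℝ) * ((n:ℝ) + c0 + 1) + 1)
      rw [ae_restrict_iff' measurableSet_Icc]
      apply ae_of_all
      intro k hk
      have hFk := hF01 k hk
      have hS := hSabs k hk
      have hlb := stmt17_log_bound (x := 1 - F k) (by linarith) (by linarith)
      have key : (1 - F k) * |stmt17S n F k| ≤ (n:ℝ) + c0 + 1 := by
        have h1 : (1 - F k) * |stmt17S n F k|
            ≤ (1 - F k) * ((n:ℝ) + c0 + |Real.log (1 - F k)|) :=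
          mul_le_mul_of_nonneg_left hS (by linarith)
        nlinarith [abs_nonneg (Real.log (1 - F k))]
      unfold stmt17R
      rw [Real.norm_eq_abs]
      have h2 : |(n:ℝ) * (1 - F k) * stmt17S n F k| ≤ (n:ℝ) * ((n:ℝ) + c0 + 1) := by
        rw [abs_mul, abs_mul, abs_of_nonneg (Nat.cast_nonneg n : (0:ℝ) ≤ n),
          abs_of_nonneg (by linarith : (0:ℝ) ≤ 1 - F k), mul_assoc]
        exact mul_le_mul_of_nonneg_left key (Nat.cast_nonneg n)
      have h3 : |F k ^ n| ≤ 1 := by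
        rw [abs_of_nonneg (pow_nonneg hFk.1 _)]
        exact pow_le_one₀ hFk.1 hFk.2
      calc |(n:ℝ) * (1 - F k) * stmt17S n F k - F k ^ n|
          ≤ |(n:ℝ) * (1 - F k) * stmt17S n F k| + |F k ^ n| := abs_sub _ _
        _ ≤ (n:ℝ) * ((n:ℝ) + c0 + 1) + 1 := by linarith
  -- continuity of the sum part
  have hSumCont : ContinuousOn
      (fun k => ∑ i ∈ Finset.Icc 1 (n - 1), (F 0 ^ i - F k ^ i) / (i:ℝ)) (Set.Icc (0:ℝ) 1) := by
    apply continuousOn_finset_sum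
    intro i _
    exact (continuousOn_const.sub (hFc.pow i)).div_const _
  -- continuity of Phi on [0,1]
  have hPhicont : ContinuousOn (stmt17Phi n F) (Set.Icc (0:ℝ) 1) := by
    intro t ht
    show ContinuousWithinAt (fun k => k * F k ^ n + stmt17G F k * ((n:ℝ) * stmt17S n F k))
      (Set.Icc (0:ℝ) 1) t
    have hA : ContinuousWithinAt (fun k => k * F k ^ n) (Set.Icc (0:ℝ) 1) t :=
      continuousWithinAt_id.mul ((hFc t ht).pow n)
    rcases eq_or_lt_of_le ht.2 with h1 | h1
    · subst h1
      have hB : Tendsto (fun k => stmt17G F k * ((n:ℝ) * stmt17S n F k))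
          (𝓝[Set.Icc (0:ℝ) 1] 1) (𝓝 0) := by
        apply squeeze_zero_norm' (a := fun k : ℝ => (1 - k) * ((n:ℝ) * ((n:ℝ) + c0 + 1)))
        · filter_upwards [self_mem_nhdsWithin] with k hk
          have hFk := hF01 k hk
          have hS := hSabs k hk
          have hlb := stmt17_log_bound (x := 1 - F k) (by linarith) (by linarith)
          have hg0 := hG0 k hk
          have hgle := hGle k hk
          have hkey : (1 - F k) * |stmt17S n F k| ≤ (n:ℝ) + c0 + 1 := by
            have h1 : (1 - F k) * |stmt17S n F k|
                ≤ (1 - F k) * ((n:ℝ) + c0 + |Real.log (1 - F k)|) :=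
              mul_le_mul_of_nonneg_left hS (by linarith)
            nlinarith [abs_nonneg (Real.log (1 - F k))]
          rw [Real.norm_eq_abs, abs_mul, abs_mul,
            abs_of_nonneg (Nat.cast_nonneg n : (0:ℝ) ≤ n), abs_of_nonneg hg0]
          have h1k : (0:ℝ) ≤ 1 - k := by linarith [hk.2]
          calc stmt17G F k * ((n:ℝ) * |stmt17S n F k|)
              ≤ ((1 - k) * (1 - F k)) * ((n:ℝ) * |stmt17S n F k|) := by
                apply mul_le_mul_of_nonneg_right hgle (by positivity)
            _ = (1 - k) * ((n:ℝ) * ((1 - F k) * |stmt17S n F k|)) := by ring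
            _ ≤ (1 - k) * ((n:ℝ) * ((n:ℝ) + c0 + 1)) := by
                exact mul_le_mul_of_nonneg_left
                  (mul_le_mul_of_nonneg_left hkey (Nat.cast_nonneg n)) h1k
        · have h : Tendsto (fun k : ℝ => (1 - k) * ((n:ℝ) * ((n:ℝ) + c0 + 1))) (𝓝 (1:ℝ))
              (𝓝 ((1 - 1) * ((n:ℝ) * ((n:ℝ) + c0 + 1)))) :=
            ((continuous_const.sub continuous_id).mul continuous_const).tendsto 1
          have h2 := h.mono_left (nhdsWithin_le_nhds (s := Set.Icc (0:ℝ) 1))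
          simpa using h2
      have hB1 : stmt17G F 1 * ((n:ℝ) * stmt17S n F 1) = 0 := by simp [stmt17G]
      have hBc : ContinuousWithinAt (fun k => stmt17G F k * ((n:ℝ) * stmt17S n F k))
          (Set.Icc (0:ℝ) 1) 1 := by
        have hB1' : (fun k => stmt17G F k * ((n:ℝ) * stmt17S n F k)) 1 = 0 := by
          simp [stmt17G]
        unfold ContinuousWithinAt
        rw [hB1']
        exact hB
      exact hA.add hBc
    · have hp := hpos t ⟨ht.1, h1⟩
      have hlogc : ContinuousWithinAt (fun k => Real.log (1 - F k)) (Set.Icc (0:ℝ) 1) t :=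
        (continuousWithinAt_const.sub (hFc t ht)).log (ne_of_gt hp)
      have hSc : ContinuousWithinAt (stmt17S n F) (Set.Icc (0:ℝ) 1) t := by
        unfold stmt17S
        exact ((hSumCont t ht).add continuousWithinAt_const).sub hlogc
      exact hA.add ((hGcont t ht).mul (continuousWithinAt_const.mul hSc))
  -- fundamental theorem of calculus
  have hftc := intervalIntegral.integral_eq_sub_of_hasDerivAt_of_le
    (by norm_num : (0:ℝ) ≤ 1) hPhicont hPhid (hLint.sub hRint)
  rw [intervalIntegral.integral_sub hLint hRint] at hftc
  have hPhi1 : stmt17Phi n F 1 = 1 := by simp [stmt17Phi, stmt17G, hone]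
  have hPhi0 : stmt17Phi n F 0 = 0 := by simp [stmt17Phi, stmt17S]
  rw [hPhi1, hPhi0] at hftc
  linarith



/-- change-of-variable identity for the expected maximum of `n`
i.i.d. signals (the total surplus).  With `F` a C¹ nondecreasing virtual-value
CDF on `[0,1]`, `F(1) = 1`, `F < 1` on `[0,1)`, and
`x(k) = k + (∫ₖ¹ (1−F))/(1−F(k))`:
`∫₀¹ x(k)·n·F(k)ⁿ⁻¹·F′(k) dk
  = 1 + ∫₀¹ [ n(1−F(k))(∑_{i=1}^{n−1} (F(0)ⁱ−F(k)ⁱ)/i + log(1−F(0)) − log(1−F(k)))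
              − F(k)ⁿ ] dk`. -/
theorem stmt17 (n : ℕ) (hn : 1 ≤ n) (F F' : ℝ → ℝ)
    (hderiv : ∀ t ∈ Set.Icc (0:ℝ) 1, HasDerivWithinAt F (F' t) (Set.Icc (0:ℝ) 1) t)
    (hF'cont : ContinuousOn F' (Set.Icc (0:ℝ) 1))
    (hmono : MonotoneOn F (Set.Icc (0:ℝ) 1))
    (hrange : ∀ t ∈ Set.Icc (0:ℝ) 1, F t ∈ Set.Icc (0:ℝ) 1)
    (hone : F 1 = 1)
    (hlt : ∀ t ∈ Set.Ico (0:ℝ) 1, F t < 1) :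
    (∫ k in (0:ℝ)..1,
        (k + (∫ s in k..(1:ℝ), (1 - F s)) / (1 - F k)) *
          (n * F k ^ (n - 1) * F' k)) =
      1 + ∫ k in (0:ℝ)..1,
        (n * (1 - F k) *
            ((∑ i ∈ Finset.Icc 1 (n - 1), (F 0 ^ i - F k ^ i) / (i : ℝ)) +
              Real.log (1 - F 0) - Real.log (1 - F k)) -
          F k ^ n) := by
  exact stmt17' n hn F F' hderiv hF'cont hmono hrange hone hlt
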